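/- Under the hypotheses of the previous closed-loop construction with λ > 0, setting ε = min{1, λ} > 0, every C^1 solution satisfies d/dt V(z(t),ξ(t)) ≤ v(t)ᵀ ẏ(t) − ε ‖ẏ(t)‖², i.e., the resulting closed-loop system is nonlinear output strictly negative imaginary (OSNI) with degree of output strictness ε. -/

import Mathlib

open scoped BigOperators

open ContinuousLinearMap in
lemma sum_single_apply' {n : ℕ} (L : (Fin n → ℝ) →L[ℝ] ℝ) (v : Fin n → ℝ) :
    ∑ i, L (Pi.single i 1) * v i = L v := by
  have hv : v = ∑ i, v i • (Pi.single i 1 : Fin n → ℝ) := by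
    funext j
    simp [Pi.single_apply]
  conv_rhs => rw [hv]
  rw [map_sum]
  simp [mul_comm]


set_option maxHeartbeats 2000000 in
/-- STATEMENT 1: the closed-loop system
ż = A11 z + p(y), ξ̇1 = v1 − (∂V/∂ξ1)ᵀ, ξ̇2 = ξ3, ξ̇3 = v2 − (∂V/∂ξ2)ᵀ − λξ3,
y = (ξ1,ξ2), with V(z,ξ) = V1(z + A11⁻¹p(y)) + V2(y) + (1/2)‖ξ3‖², satisfies
along any C¹ solution, for all t ≥ 0,
d/dt V ≤ vᵀẏ − ε‖ẏ‖² with ε = min{1, λ} > 0, i.e. the closed-loop system is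
nonlinear OSNI with degree of output strictness ε = min{1,λ}.
(STATEMENT 2; here λ > 0 and ‖ẏ‖² = ‖ξ̇1‖² + ‖ξ̇2‖².) -/
theorem stmt2 (m p1 p2 : ℕ)
    (A11 : Matrix (Fin m) (Fin m) ℝ) (hA : IsUnit A11.det)
    (p : ((Fin p1 → ℝ) × (Fin p2 → ℝ)) → (Fin m → ℝ)) (hpC : ContDiff ℝ 1 p)
    (hp0 : p 0 = 0)
    (V1 : (Fin m → ℝ) → ℝ) (hV1C : ContDiff ℝ 1 V1)
    (hV1dec : ∀ α : Fin m → ℝ, fderiv ℝ V1 α (A11.mulVec α) ≤ 0)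
    (V2 : ((Fin p1 → ℝ) × (Fin p2 → ℝ)) → ℝ) (hV2C : ContDiff ℝ 1 V2)
    (lam : ℝ) (hlam : 0 < lam)
    (V : (Fin m → ℝ) → (Fin p1 → ℝ) → (Fin p2 → ℝ) → (Fin p2 → ℝ) → ℝ)
    (hV : ∀ z ξ1 ξ2 ξ3, V z ξ1 ξ2 ξ3 =
      V1 (z + A11⁻¹.mulVec (p (ξ1, ξ2))) + V2 (ξ1, ξ2) + (1/2) * ∑ i, (ξ3 i)^2)
    -- the gradients of V with respect to ξ1 and ξ2
    (g1 : (Fin m → ℝ) → (Fin p1 → ℝ) → (Fin p2 → ℝ) → (Fin p2 → ℝ) → (Fin p1 → ℝ))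
    (hg1 : ∀ z ξ1 ξ2 ξ3 i, g1 z ξ1 ξ2 ξ3 i =
      fderiv ℝ (fun a => V z a ξ2 ξ3) ξ1 (Pi.single i 1))
    (g2 : (Fin m → ℝ) → (Fin p1 → ℝ) → (Fin p2 → ℝ) → (Fin p2 → ℝ) → (Fin p2 → ℝ))
    (hg2 : ∀ z ξ1 ξ2 ξ3 i, g2 z ξ1 ξ2 ξ3 i =
      fderiv ℝ (fun a => V z ξ1 a ξ3) ξ2 (Pi.single i 1))
    -- a C¹ solution of the closed-loop system
    (z : ℝ → Fin m → ℝ) (ξ1 : ℝ → Fin p1 → ℝ) (ξ2 ξ3 : ℝ → Fin p2 → ℝ)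
    (v1 : ℝ → Fin p1 → ℝ) (v2 : ℝ → Fin p2 → ℝ)
    (z' : ℝ → Fin m → ℝ) (ξ1' : ℝ → Fin p1 → ℝ) (ξ2' ξ3' : ℝ → Fin p2 → ℝ)
    (hz : ∀ t, HasDerivAt z (z' t) t) (hdξ1 : ∀ t, HasDerivAt ξ1 (ξ1' t) t)
    (hdξ2 : ∀ t, HasDerivAt ξ2 (ξ2' t) t) (hdξ3 : ∀ t, HasDerivAt ξ3 (ξ3' t) t)
    (hz' : ∀ t, z' t = A11.mulVec (z t) + p (ξ1 t, ξ2 t))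
    (hξ1' : ∀ t, ξ1' t = v1 t - g1 (z t) (ξ1 t) (ξ2 t) (ξ3 t))
    (hξ2' : ∀ t, ξ2' t = ξ3 t)
    (hξ3' : ∀ t, ξ3' t = v2 t - g2 (z t) (ξ1 t) (ξ2 t) (ξ3 t) - lam • ξ3 t) :
    ∀ t : ℝ, 0 ≤ t →
      deriv (fun s => V (z s) (ξ1 s) (ξ2 s) (ξ3 s)) t ≤
        ((∑ i, v1 t i * ξ1' t i) + ∑ i, v2 t i * ξ2' t i)
          - min 1 lam * ((∑ i, (ξ1' t i)^2) + ∑ i, (ξ2' t i)^2) := by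
  intro t _
  classical
  -- basic continuous linear maps
  set Mi : (Fin m → ℝ) →L[ℝ] (Fin m → ℝ) :=
    LinearMap.toContinuousLinearMap (Matrix.mulVecLin A11⁻¹) with hMi
  have hMiv : ∀ x, Mi x = A11⁻¹.mulVec x := fun x => rfl
  set yt : (Fin p1 → ℝ) × (Fin p2 → ℝ) := (ξ1 t, ξ2 t) with hyt
  set αt : Fin m → ℝ := z t + A11⁻¹.mulVec (p yt) with hαt
  set L1 : (Fin m → ℝ) →L[ℝ] ℝ := fderiv ℝ V1 αt with hL1
  set L2 : ((Fin p1 → ℝ) × (Fin p2 → ℝ)) →L[ℝ] ℝ := fderiv ℝ V2 yt with hL2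
  set P : ((Fin p1 → ℝ) × (Fin p2 → ℝ)) →L[ℝ] (Fin m → ℝ) := fderiv ℝ p yt with hP
  have hV1at : HasFDerivAt V1 L1 αt := (hV1C.differentiable one_ne_zero αt).hasFDerivAt
  have hV2at : HasFDerivAt V2 L2 yt := (hV2C.differentiable one_ne_zero yt).hasFDerivAt
  have hPat : HasFDerivAt p P yt := (hpC.differentiable one_ne_zero yt).hasFDerivAt
  -- total derivative along the solution
  have hy : HasDerivAt (fun s => (ξ1 s, ξ2 s)) (ξ1' t, ξ2' t) t := (hdξ1 t).prodMk (hdξ2 t)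
  have hpc : HasDerivAt (fun s => p (ξ1 s, ξ2 s)) (P (ξ1' t, ξ2' t)) t :=
    hPat.comp_hasDerivAt t hy
  have hMic : HasDerivAt (fun s => A11⁻¹.mulVec (p (ξ1 s, ξ2 s)))
      (A11⁻¹.mulVec (P (ξ1' t, ξ2' t))) t := by
    have := Mi.hasFDerivAt.comp_hasDerivAt t hpc
    simpa [hMiv, Function.comp_def] using this
  have hα : HasDerivAt (fun s => z s + A11⁻¹.mulVec (p (ξ1 s, ξ2 s)))
      (z' t + A11⁻¹.mulVec (P (ξ1' t, ξ2' t))) t := (hz t).add hMic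
  have hV1d : HasDerivAt (fun s => V1 (z s + A11⁻¹.mulVec (p (ξ1 s, ξ2 s))))
      (L1 (z' t + A11⁻¹.mulVec (P (ξ1' t, ξ2' t)))) t :=
    hV1at.comp_hasDerivAt t hα
  have hV2d : HasDerivAt (fun s => V2 (ξ1 s, ξ2 s)) (L2 (ξ1' t, ξ2' t)) t :=
    hV2at.comp_hasDerivAt t hy
  have hsq : HasDerivAt (fun s => (1/2 : ℝ) * ∑ i, (ξ3 s i)^2)
      (∑ i, ξ3 t i * ξ3' t i) t := by
    have h1 : HasDerivAt (fun s => ∑ i, (ξ3 s i)^2)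
        (∑ i : Fin p2, (2 : ℕ) * (ξ3 t i) ^ 1 * ξ3' t i) t := by
      apply HasDerivAt.fun_sum
      intro i _
      exact ((hasDerivAt_pi.1 (hdξ3 t)) i).pow 2
    have := h1.const_mul (1/2 : ℝ)
    refine this.congr_deriv ?_
    rw [Finset.mul_sum]
    apply Finset.sum_congr rfl
    intro i _
    push_cast
    ring
  have hD : HasDerivAt (fun s => V (z s) (ξ1 s) (ξ2 s) (ξ3 s))
      (L1 (z' t + A11⁻¹.mulVec (P (ξ1' t, ξ2' t))) + L2 (ξ1' t, ξ2' t)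
        + ∑ i, ξ3 t i * ξ3' t i) t := by
    have heq : (fun s => V (z s) (ξ1 s) (ξ2 s) (ξ3 s)) =
        fun s => V1 (z s + A11⁻¹.mulVec (p (ξ1 s, ξ2 s))) + V2 (ξ1 s, ξ2 s)
          + (1/2 : ℝ) * ∑ i, (ξ3 s i)^2 := funext fun s => hV _ _ _ _
    rw [heq]
    exact (hV1d.add hV2d).add hsq
  rw [hD.deriv]
  -- partial derivative with respect to ξ1
  have hg1v : ∀ i, g1 (z t) (ξ1 t) (ξ2 t) (ξ3 t) i =
      (L1.comp (Mi.comp (P.comp (ContinuousLinearMap.inl ℝ _ _)))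
       + L2.comp (ContinuousLinearMap.inl ℝ _ _)) (Pi.single i 1) := by
    intro i
    rw [hg1]
    congr 1
    have heq : (fun a => V (z t) a (ξ2 t) (ξ3 t)) =
        fun a => V1 (z t + A11⁻¹.mulVec (p (a, ξ2 t))) + V2 (a, ξ2 t)
          + (1/2 : ℝ) * ∑ i, (ξ3 t i)^2 := funext fun a => hV _ _ _ _
    rw [heq]
    have h0 : HasFDerivAt (fun a : Fin p1 → ℝ => (a, ξ2 t))
        (ContinuousLinearMap.inl ℝ (Fin p1 → ℝ) (Fin p2 → ℝ)) (ξ1 t) :=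
      hasFDerivAt_prodMk_left (ξ1 t) (ξ2 t)
    have hpp : HasFDerivAt (fun a : Fin p1 → ℝ => p (a, ξ2 t))
        (P.comp (ContinuousLinearMap.inl ℝ _ _)) (ξ1 t) := hPat.comp (ξ1 t) h0
    have hmm : HasFDerivAt (fun a : Fin p1 → ℝ => A11⁻¹.mulVec (p (a, ξ2 t)))
        (Mi.comp (P.comp (ContinuousLinearMap.inl ℝ _ _))) (ξ1 t) := by
      have := Mi.hasFDerivAt.comp (ξ1 t) hpp
      simpa [hMiv, Function.comp] using this
    have hcc : HasFDerivAt (fun a : Fin p1 → ℝ => z t + A11⁻¹.mulVec (p (a, ξ2 t)))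
        (Mi.comp (P.comp (ContinuousLinearMap.inl ℝ _ _))) (ξ1 t) := hmm.const_add (z t)
    have hV1p : HasFDerivAt (fun a : Fin p1 → ℝ => V1 (z t + A11⁻¹.mulVec (p (a, ξ2 t))))
        (L1.comp (Mi.comp (P.comp (ContinuousLinearMap.inl ℝ _ _)))) (ξ1 t) :=
      hV1at.comp (ξ1 t) hcc
    have hV2p : HasFDerivAt (fun a : Fin p1 → ℝ => V2 (a, ξ2 t))
        (L2.comp (ContinuousLinearMap.inl ℝ _ _)) (ξ1 t) := hV2at.comp (ξ1 t) h0
    exact ((hV1p.add hV2p).add_const _).fderiv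
  -- partial derivative with respect to ξ2
  have hg2v : ∀ i, g2 (z t) (ξ1 t) (ξ2 t) (ξ3 t) i =
      (L1.comp (Mi.comp (P.comp (ContinuousLinearMap.inr ℝ _ _)))
       + L2.comp (ContinuousLinearMap.inr ℝ _ _)) (Pi.single i 1) := by
    intro i
    rw [hg2]
    congr 1
    have heq : (fun a => V (z t) (ξ1 t) a (ξ3 t)) =
        fun a => V1 (z t + A11⁻¹.mulVec (p (ξ1 t, a))) + V2 (ξ1 t, a)
          + (1/2 : ℝ) * ∑ i, (ξ3 t i)^2 := funext fun a => hV _ _ _ _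
    rw [heq]
    have h0 : HasFDerivAt (fun a : Fin p2 → ℝ => ((ξ1 t), a))
        (ContinuousLinearMap.inr ℝ (Fin p1 → ℝ) (Fin p2 → ℝ)) (ξ2 t) :=
      hasFDerivAt_prodMk_right (ξ1 t) (ξ2 t)
    have hpp : HasFDerivAt (fun a : Fin p2 → ℝ => p (ξ1 t, a))
        (P.comp (ContinuousLinearMap.inr ℝ _ _)) (ξ2 t) := hPat.comp (ξ2 t) h0
    have hmm : HasFDerivAt (fun a : Fin p2 → ℝ => A11⁻¹.mulVec (p (ξ1 t, a)))
        (Mi.comp (P.comp (ContinuousLinearMap.inr ℝ _ _))) (ξ2 t) := by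
      have := Mi.hasFDerivAt.comp (ξ2 t) hpp
      simpa [hMiv, Function.comp] using this
    have hcc : HasFDerivAt (fun a : Fin p2 → ℝ => z t + A11⁻¹.mulVec (p (ξ1 t, a)))
        (Mi.comp (P.comp (ContinuousLinearMap.inr ℝ _ _))) (ξ2 t) := hmm.const_add (z t)
    have hV1p : HasFDerivAt (fun a : Fin p2 → ℝ => V1 (z t + A11⁻¹.mulVec (p (ξ1 t, a))))
        (L1.comp (Mi.comp (P.comp (ContinuousLinearMap.inr ℝ _ _)))) (ξ2 t) :=
      hV1at.comp (ξ2 t) hcc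
    have hV2p : HasFDerivAt (fun a : Fin p2 → ℝ => V2 (ξ1 t, a))
        (L2.comp (ContinuousLinearMap.inr ℝ _ _)) (ξ2 t) := hV2at.comp (ξ2 t) h0
    exact ((hV1p.add hV2p).add_const _).fderiv
  -- sums of gradients
  have hS1 : ∑ i, g1 (z t) (ξ1 t) (ξ2 t) (ξ3 t) i * ξ1' t i =
      L1 (A11⁻¹.mulVec (P (ξ1' t, 0))) + L2 (ξ1' t, 0) := by
    have := sum_single_apply'
      (L1.comp (Mi.comp (P.comp (ContinuousLinearMap.inl ℝ _ _)))
       + L2.comp (ContinuousLinearMap.inl ℝ _ _)) (ξ1' t)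
    rw [Finset.sum_congr rfl (fun i _ => by rw [hg1v i])]
    rw [this]
    simp [hMiv]
  have hS2 : ∑ i, g2 (z t) (ξ1 t) (ξ2 t) (ξ3 t) i * ξ2' t i =
      L1 (A11⁻¹.mulVec (P (0, ξ2' t))) + L2 (0, ξ2' t) := by
    have := sum_single_apply'
      (L1.comp (Mi.comp (P.comp (ContinuousLinearMap.inr ℝ _ _)))
       + L2.comp (ContinuousLinearMap.inr ℝ _ _)) (ξ2' t)
    rw [Finset.sum_congr rfl (fun i _ => by rw [hg2v i])]
    rw [this]
    simp [hMiv]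
  -- combine partials
  have hsplit : L1 (A11⁻¹.mulVec (P (ξ1' t, ξ2' t))) + L2 (ξ1' t, ξ2' t) =
      (∑ i, g1 (z t) (ξ1 t) (ξ2 t) (ξ3 t) i * ξ1' t i)
      + ∑ i, g2 (z t) (ξ1 t) (ξ2 t) (ξ3 t) i * ξ2' t i := by
    rw [hS1, hS2]
    have h1 : ((ξ1' t, (0 : Fin p2 → ℝ)) : (Fin p1 → ℝ) × (Fin p2 → ℝ))
        + ((0 : Fin p1 → ℝ), ξ2' t) = (ξ1' t, ξ2' t) := by
      simp [Prod.ext_iff]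
    have h2 : P (ξ1' t, 0) + P (0, ξ2' t) = P (ξ1' t, ξ2' t) := by
      rw [← map_add, h1]
    have h3 : A11⁻¹.mulVec (P (ξ1' t, 0)) + A11⁻¹.mulVec (P (0, ξ2' t)) =
        A11⁻¹.mulVec (P (ξ1' t, ξ2' t)) := by
      rw [← Matrix.mulVec_add, h2]
    have h4 : L1 (A11⁻¹.mulVec (P (ξ1' t, 0))) + L1 (A11⁻¹.mulVec (P (0, ξ2' t))) =
        L1 (A11⁻¹.mulVec (P (ξ1' t, ξ2' t))) := by rw [← map_add, h3]
    have h5 : L2 (ξ1' t, 0) + L2 (0, ξ2' t) = L2 (ξ1' t, ξ2' t) := by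
      rw [← map_add, h1]
    linarith [h4, h5]
  -- the z-part is nonpositive
  have hc1 : L1 (z' t) ≤ 0 := by
    have hmv : A11.mulVec αt = z' t := by
      rw [hαt, hz' t, Matrix.mulVec_add, Matrix.mulVec_mulVec,
        Matrix.mul_nonsing_inv A11 hA, Matrix.one_mulVec]
    have := hV1dec αt
    rwa [hmv] at this
  -- algebra
  rw [map_add L1]
  have hg1' : ∀ i, g1 (z t) (ξ1 t) (ξ2 t) (ξ3 t) i = v1 t i - ξ1' t i := by
    intro i
    have := congrFun (hξ1' t) i
    simp at this
    linarith
  have hξ3eq : ξ3 t = ξ2' t := (hξ2' t).symm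
  have hξ3'eq : ∀ i, ξ3' t i = v2 t i - g2 (z t) (ξ1 t) (ξ2 t) (ξ3 t) i - lam * ξ2' t i := by
    intro i
    have := congrFun (hξ3' t) i
    simpa [hξ3eq] using this
  have hS3 : ∑ i, ξ3 t i * ξ3' t i =
      (∑ i, v2 t i * ξ2' t i) - (∑ i, g2 (z t) (ξ1 t) (ξ2 t) (ξ3 t) i * ξ2' t i)
        - lam * ∑ i, (ξ2' t i)^2 := by
    rw [Finset.mul_sum, ← Finset.sum_sub_distrib, ← Finset.sum_sub_distrib]
    apply Finset.sum_congr rfl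
    intro i _
    rw [hξ3'eq i, congrFun hξ3eq i]
    ring
  have hS1' : ∑ i, g1 (z t) (ξ1 t) (ξ2 t) (ξ3 t) i * ξ1' t i =
      (∑ i, v1 t i * ξ1' t i) - ∑ i, (ξ1' t i)^2 := by
    rw [← Finset.sum_sub_distrib]
    apply Finset.sum_congr rfl
    intro i _
    rw [hg1' i]
    ring
  have hA1 : (0:ℝ) ≤ ∑ i, (ξ1' t i)^2 := Finset.sum_nonneg fun i _ => sq_nonneg _
  have hB1 : (0:ℝ) ≤ ∑ i, (ξ2' t i)^2 := Finset.sum_nonneg fun i _ => sq_nonneg _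
  have hm1 : min 1 lam * (∑ i, (ξ1' t i)^2) ≤ 1 * ∑ i, (ξ1' t i)^2 :=
    mul_le_mul_of_nonneg_right (min_le_left 1 lam) hA1
  have hm2 : min 1 lam * (∑ i, (ξ2' t i)^2) ≤ lam * ∑ i, (ξ2' t i)^2 :=
    mul_le_mul_of_nonneg_right (min_le_right 1 lam) hB1
  nlinarith [hsplit, hc1, hS3, hS1', hm1, hm2]
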